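/- Let S > 0 and r > 0. Any twice continuously differentiable function u₀ : ℝ → ℝ satisfying u₀''(x) + S·f(u₀(x)) + (2S/r)(2u₀(x)−1)(u₀'(x))² = 0 for all x ∈ ℝ, together with lim_{x→−∞} u₀(x) = 1 and lim_{x→+∞} u₀(x) = 0, satisfies 0 < u₀(x) < 1 for all x ∈ ℝ and lim_{x→−∞} u₀'(x) = lim_{x→+∞} u₀'(x) = 0. -/

import Mathlib

open Real Filter Topology

noncomputable def fpoly (u : ℝ) : ℝ := u * (2 * u - 1) * (1 - u)

open intervalIntegral

noncomputable def Pf (c s : ℝ) : ℝ := Real.exp (c * (s ^ 2 - s))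

noncomputable def Gint (c t : ℝ) : ℝ := (Pf c t) ^ 2 * fpoly t

noncomputable def Gf (c u : ℝ) : ℝ := ∫ t in (0:ℝ)..u, Gint c t

noncomputable def Phif (c u : ℝ) : ℝ := ∫ t in (0:ℝ)..u, Pf c t

lemma Pf_pos (c s : ℝ) : 0 < Pf c s := Real.exp_pos _

lemma Pf_continuous (c : ℝ) : Continuous (Pf c) := by
  unfold Pf; fun_prop

lemma fpoly_continuous : Continuous fpoly := by
  unfold fpoly; fun_prop

lemma Gint_continuous (c : ℝ) : Continuous (Gint c) := by
  unfold Gint; exact ((Pf_continuous c).pow 2).mul fpoly_continuous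

lemma hasDerivAt_Pf (c s : ℝ) : HasDerivAt (Pf c) (c * (2 * s - 1) * Pf c s) s := by
  have h : HasDerivAt (fun s : ℝ => c * (s ^ 2 - s)) (c * (2 * s - 1)) s := by
    have := ((hasDerivAt_pow 2 s).sub (hasDerivAt_id s)).const_mul c
    simpa using this.congr_deriv (by ring)
  unfold Pf
  simpa [Pf, mul_comm] using h.exp

lemma hasDerivAt_Gf (c u : ℝ) : HasDerivAt (Gf c) (Gint c u) u :=
  intervalIntegral.integral_hasDerivAt_right
    ((Gint_continuous c).intervalIntegrable _ _)
    ((Gint_continuous c).stronglyMeasurableAtFilter _ _)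
    (Gint_continuous c).continuousAt

lemma Gf_continuous (c : ℝ) : Continuous (Gf c) := by
  have : Differentiable ℝ (Gf c) := fun u => (hasDerivAt_Gf c u).differentiableAt
  exact this.continuous

lemma hasDerivAt_Phif (c u : ℝ) : HasDerivAt (Phif c) (Pf c u) u :=
  intervalIntegral.integral_hasDerivAt_right
    ((Pf_continuous c).intervalIntegrable _ _)
    ((Pf_continuous c).stronglyMeasurableAtFilter _ _)
    (Pf_continuous c).continuousAt

lemma Phif_continuous (c : ℝ) : Continuous (Phif c) := by
  have : Differentiable ℝ (Phif c) := fun u => (hasDerivAt_Phif c u).differentiableAt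
  exact this.continuous

lemma Gf_zero (c : ℝ) : Gf c 0 = 0 := by simp [Gf]

lemma Phif_zero (c : ℝ) : Phif c 0 = 0 := by simp [Phif]

lemma Gint_symm (c t : ℝ) : Gint c (1 - t) = - Gint c t := by
  unfold Gint Pf fpoly
  have : (1 - t) ^ 2 - (1 - t) = t ^ 2 - t := by ring
  rw [this]; ring

lemma Gf_one (c : ℝ) : Gf c 1 = 0 := by
  have h : (∫ t in (0:ℝ)..1, Gint c (1 - t)) = ∫ t in (0:ℝ)..1, Gint c t := by
    rw [intervalIntegral.integral_comp_sub_left (fun t => Gint c t) 1]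
    norm_num
  have h2 : (∫ t in (0:ℝ)..1, Gint c (1 - t)) = - ∫ t in (0:ℝ)..1, Gint c t := by
    simp_rw [Gint_symm]
    exact intervalIntegral.integral_neg
  have : (∫ t in (0:ℝ)..1, Gint c t) = 0 := by linarith [h.symm.trans h2]
  simpa [Gf] using this

lemma Gf_neg_of_one_lt (c : ℝ) {v : ℝ} (hv : 1 < v) : Gf c v < 0 := by
  have hsplit : Gf c v = Gf c 1 + ∫ t in (1:ℝ)..v, Gint c t := by
    rw [Gf, Gf, intervalIntegral.integral_add_adjacent_intervals] <;>
      exact (Gint_continuous c).intervalIntegrable _ _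
  rw [hsplit, Gf_one, zero_add]
  have hpos : (0:ℝ) < ∫ t in (1:ℝ)..v, -Gint c t := by
    apply intervalIntegral_pos_of_pos_on
    · exact ((Gint_continuous c).neg).intervalIntegrable _ _
    · intro x hx
      have hx1 : 1 < x := hx.1
      have : Gint c x < 0 := by
        unfold Gint fpoly
        have hP : 0 < Pf c x ^ 2 := pow_pos (Pf_pos c x) 2
        have : x * (2 * x - 1) * (1 - x) < 0 :=
          mul_neg_of_pos_of_neg (mul_pos (by linarith) (by linarith)) (by linarith)
        nlinarith
      linarith
    · exact hv
  rw [intervalIntegral.integral_neg] at hpos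
  linarith

lemma Gf_neg_of_neg (c : ℝ) {v : ℝ} (hv : v < 0) : Gf c v < 0 := by
  have : Gf c v = - ∫ t in v..(0:ℝ), Gint c t := by
    rw [Gf, intervalIntegral.integral_symm]
  rw [this, neg_lt, neg_zero]
  apply intervalIntegral_pos_of_pos_on
  · exact (Gint_continuous c).intervalIntegrable _ _
  · intro x hx
    have hx0 : x < 0 := hx.2
    unfold Gint fpoly
    have hP : 0 < Pf c x ^ 2 := pow_pos (Pf_pos c x) 2
    have : 0 < x * (2 * x - 1) * (1 - x) :=
      mul_pos (mul_pos_of_neg_of_neg (by linarith) (by linarith)) (by linarith)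
    nlinarith
  · exact hv

lemma Pf_le_one {c : ℝ} (hc : 0 ≤ c) {t : ℝ} (ht : t ∈ Set.Icc (0:ℝ) 1) : Pf c t ≤ 1 := by
  rw [Pf, show (1:ℝ) = Real.exp 0 by simp]
  apply Real.exp_le_exp.mpr
  have h1 : t ^ 2 - t ≤ 0 := by nlinarith [ht.1, ht.2]
  exact mul_nonpos_of_nonneg_of_nonpos hc h1

lemma Pf_ge {c : ℝ} (hc : 0 ≤ c) (t : ℝ) : Real.exp (-(c/4)) ≤ Pf c t := by
  apply Real.exp_le_exp.mpr
  nlinarith [sq_nonneg (t - 1/2)]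

lemma Gf_ge_sq {c : ℝ} (hc : 0 ≤ c) {v : ℝ} (hv : v ∈ Set.Icc (0:ℝ) 1) :
    -(v ^ 2 / 2) ≤ Gf c v := by
  have key : ∀ t ∈ Set.Icc (0:ℝ) v, -t ≤ Gint c t := by
    intro t ht
    have ht' : t ∈ Set.Icc (0:ℝ) 1 := ⟨ht.1, le_trans ht.2 hv.2⟩
    have hP1 : Pf c t ≤ 1 := Pf_le_one hc ht'
    have hP0 : 0 < Pf c t := Pf_pos c t
    have hP2 : Pf c t ^ 2 ≤ 1 := by nlinarith
    have hP2' : 0 < Pf c t ^ 2 := pow_pos hP0 2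
    have h3 : -t ≤ fpoly t := by
      unfold fpoly
      nlinarith [mul_nonneg (mul_nonneg ht'.1 ht'.1)
        (by linarith [ht'.2] : (0:ℝ) ≤ 3 - 2 * t)]
    unfold Gint
    nlinarith [mul_nonneg hP2'.le (by linarith : (0:ℝ) ≤ fpoly t + t),
      mul_nonneg ht'.1 (by linarith : (0:ℝ) ≤ 1 - Pf c t ^ 2)]
  have hmono : (∫ t in (0:ℝ)..v, -t) ≤ ∫ t in (0:ℝ)..v, Gint c t := by
    apply intervalIntegral.integral_mono_on hv.1
    · exact (continuous_id.neg).intervalIntegrable _ _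
    · exact (Gint_continuous c).intervalIntegrable _ _
    · exact key
  have hid : (∫ t in (0:ℝ)..v, -t) = -(v ^ 2 / 2) := by
    rw [intervalIntegral.integral_neg, integral_id]; ring
  rw [Gf]; linarith [hmono, hid.symm.le]

lemma Gf_ge_one_sub_sq {c : ℝ} (hc : 0 ≤ c) {v : ℝ} (hv : v ∈ Set.Icc (0:ℝ) 1) :
    -((1 - v) ^ 2 / 2) ≤ Gf c v := by
  have hsplit : Gf c 1 = Gf c v + ∫ t in v..(1:ℝ), Gint c t := by
    rw [Gf, Gf, intervalIntegral.integral_add_adjacent_intervals] <;>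
      exact (Gint_continuous c).intervalIntegrable _ _
  have key : ∀ t ∈ Set.Icc v (1:ℝ), Gint c t ≤ 1 - t := by
    intro t ht
    have ht' : t ∈ Set.Icc (0:ℝ) 1 := ⟨le_trans hv.1 ht.1, ht.2⟩
    have hP1 : Pf c t ≤ 1 := Pf_le_one hc ht'
    have hP0 : 0 < Pf c t := Pf_pos c t
    have hP2 : Pf c t ^ 2 ≤ 1 := by nlinarith
    have hP2' : 0 < Pf c t ^ 2 := pow_pos hP0 2
    have h3 : fpoly t ≤ 1 - t := by
      unfold fpoly
      nlinarith [mul_nonneg (sq_nonneg (1 - t))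
        (by linarith [ht'.1] : (0:ℝ) ≤ 2 * t + 1)]
    unfold Gint
    nlinarith [mul_nonneg hP2'.le (by linarith : (0:ℝ) ≤ 1 - t - fpoly t),
      mul_nonneg (by linarith [ht'.2] : (0:ℝ) ≤ 1 - t) (by linarith : (0:ℝ) ≤ 1 - Pf c t ^ 2)]
  have hmono : (∫ t in v..(1:ℝ), Gint c t) ≤ ∫ t in v..(1:ℝ), (1 - t) := by
    apply intervalIntegral.integral_mono_on hv.2
    · exact (Gint_continuous c).intervalIntegrable _ _
    · exact (continuous_const.sub continuous_id).intervalIntegrable _ _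
    · exact key
  have hid : (∫ t in v..(1:ℝ), (1 - t)) = (1 - v) ^ 2 / 2 := by
    rw [intervalIntegral.integral_sub (intervalIntegrable_const)
      (intervalIntegral.intervalIntegrable_id), integral_id, integral_const]
    simp; ring
  have h1 : Gf c 1 = 0 := Gf_one c
  rw [hid] at hmono
  linarith

lemma abs_fpoly_le_one_sub {u : ℝ} (h0 : 0 ≤ u) (h1 : u ≤ 1) : |fpoly u| ≤ 1 - u := by
  rw [abs_le]; unfold fpoly
  constructor
  · nlinarith [mul_nonneg (by linarith : (0:ℝ) ≤ 1 - u)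
      (by nlinarith [sq_nonneg (4 * u - 1)] : (0:ℝ) ≤ 2 * u ^ 2 - u + 1)]
  · nlinarith [mul_nonneg (sq_nonneg (1 - u)) (by linarith : (0:ℝ) ≤ 2 * u + 1)]

lemma abs_fpoly_le_self {u : ℝ} (h0 : 0 ≤ u) (h1 : u ≤ 1) : |fpoly u| ≤ u := by
  rw [abs_le]; unfold fpoly
  constructor
  · nlinarith [mul_nonneg (mul_nonneg h0 h0) (by linarith : (0:ℝ) ≤ 3 - 2 * u)]
  · nlinarith [mul_nonneg h0 (by nlinarith [sq_nonneg (4 * u - 3)] :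
      (0:ℝ) ≤ 2 * u ^ 2 - 3 * u + 2)]

lemma gronwall_zero {F F' : ℝ → ℝ × ℝ} {K a : ℝ}
    (hF : ∀ t, HasDerivAt F (F' t) t) (hb : ∀ t, ‖F' t‖ ≤ K * ‖F t‖)
    (h0 : F a = 0) : ∀ t, a ≤ t → F t = 0 := by
  intro t ht
  have hcont : Continuous F := by
    have : Differentiable ℝ F := fun s => (hF s).differentiableAt
    exact this.continuous
  have hgr := norm_le_gronwallBound_of_norm_deriv_right_le (f := F) (f' := F')
    (a := a) (b := t) (δ := 0) (K := K) (ε := 0)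
    hcont.continuousOn (fun s _ => (hF s).hasDerivWithinAt)
    (by simp [h0]) (fun s _ => by simpa using hb s)
  have h1 := hgr t ⟨ht, le_rfl⟩
  rw [gronwallBound_ε0_δ0] at h1
  exact norm_le_zero_iff.mp h1

set_option maxHeartbeats 1000000 in
theorem standing_wave_a_priori (S r : ℝ) (hS : 0 < S) (hr : 0 < r)
    (u₀ : ℝ → ℝ) (hu : ContDiff ℝ 2 u₀)
    (hode : ∀ x : ℝ, deriv (deriv u₀) x + S * fpoly (u₀ x)
      + (2 * S / r) * (2 * u₀ x - 1) * (deriv u₀ x) ^ 2 = 0)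
    (hlim1 : Tendsto u₀ atBot (𝓝 1)) (hlim0 : Tendsto u₀ atTop (𝓝 0)) :
    (∀ x : ℝ, 0 < u₀ x ∧ u₀ x < 1) ∧
      Tendsto (deriv u₀) atBot (𝓝 0) ∧ Tendsto (deriv u₀) atTop (𝓝 0) := by
  set c : ℝ := 2 * S / r with hcdef
  have hc : 0 < c := by positivity
  -- regularity
  have hd1 : Differentiable ℝ u₀ := hu.differentiable (by norm_num)
  have hd2 : Differentiable ℝ (deriv u₀) := by
    have h2 : ContDiff ℝ ((1:ℕ∞) + 1) u₀ := by exact_mod_cast hu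
    exact (contDiff_succ_iff_deriv.mp h2).2.2.differentiable (by simp)
  have hcu : Continuous u₀ := hd1.continuous
  have hcu' : Continuous (deriv u₀) := hd2.continuous
  -- the ODE rewritten
  have hode' : ∀ x, deriv (deriv u₀) x
      = -(S * fpoly (u₀ x)) - c * (2 * u₀ x - 1) * (deriv u₀ x) ^ 2 := by
    intro x; have := hode x; rw [hcdef]; linarith
  -- q = P(u) * u'
  set q : ℝ → ℝ := fun x => Pf c (u₀ x) * deriv u₀ x with hqdef
  have hq : ∀ x, HasDerivAt q (-S * (Pf c (u₀ x) * fpoly (u₀ x))) x := by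
    intro x
    have h1 : HasDerivAt (fun y => Pf c (u₀ y))
        (c * (2 * u₀ x - 1) * Pf c (u₀ x) * deriv u₀ x) x :=
      (hasDerivAt_Pf c (u₀ x)).comp x (hd1 x).hasDerivAt
    have h2 : HasDerivAt (deriv u₀) (deriv (deriv u₀) x) x := (hd2 x).hasDerivAt
    have h3 := h1.mul h2
    apply h3.congr_deriv
    rw [hode' x]; ring
  -- energy
  set E : ℝ → ℝ := fun x => (1/2) * (q x) ^ 2 + S * Gf c (u₀ x) with hEdef
  have hE : ∀ x, HasDerivAt E 0 x := by
    intro x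
    have h1 : HasDerivAt (fun y => (1/2) * (q y) ^ 2)
        ((1/2) * (2 * q x ^ 1 * (-S * (Pf c (u₀ x) * fpoly (u₀ x))))) x :=
      ((hq x).pow 2).const_mul (1/2)
    have h2 : HasDerivAt (fun y => S * Gf c (u₀ y))
        (S * (Gint c (u₀ x) * deriv u₀ x)) x :=
      (((hasDerivAt_Gf c (u₀ x)).comp x (hd1 x).hasDerivAt)).const_mul S
    apply (h1.add h2).congr_deriv
    simp only [hqdef, Gint, pow_one]
    ring
  have hEconst : ∀ x, E x = E 0 := fun x =>
    is_const_of_deriv_eq_zero (fun y => (hE y).differentiableAt)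
      (fun y => (hE y).deriv) x 0
  -- limits of G(u₀) at ±∞
  have hGtop : Tendsto (fun x => Gf c (u₀ x)) atTop (𝓝 0) := by
    have := ((Gf_continuous c).tendsto 0).comp hlim0
    simpa [Gf_zero, Function.comp_def] using this
  have hGbot : Tendsto (fun x => Gf c (u₀ x)) atBot (𝓝 0) := by
    have := ((Gf_continuous c).tendsto 1).comp hlim1
    simpa [Gf_one, Function.comp_def] using this
  have hq2top : Tendsto (fun x => q x ^ 2) atTop (𝓝 (2 * E 0)) := by
    have h : ∀ x, q x ^ 2 = 2 * E 0 - 2 * S * Gf c (u₀ x) := by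
      intro x; have h1 := hEconst x
      simp only [hEdef] at h1
      show q x ^ 2 = 2 * ((1/2) * q 0 ^ 2 + S * Gf c (u₀ 0)) - 2 * S * Gf c (u₀ x)
      linarith
    have h2 : Tendsto (fun x => 2 * E 0 - 2 * S * Gf c (u₀ x)) atTop
        (𝓝 (2 * E 0 - 2 * S * 0)) := tendsto_const_nhds.sub (hGtop.const_mul _)
    simp only [mul_zero, sub_zero] at h2
    exact h2.congr fun x => (h x).symm
  -- E 0 = 0 via mean value theorem trick
  have hE00 : E 0 = 0 := by
    set w : ℝ → ℝ := fun x => Phif c (u₀ x) with hwdef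
    have hw : ∀ x, HasDerivAt w (q x) x := fun x =>
      (hasDerivAt_Phif c (u₀ x)).comp x (hd1 x).hasDerivAt
    have hwtop : Tendsto w atTop (𝓝 0) := by
      have := ((Phif_continuous c).tendsto 0).comp hlim0
      simpa [Phif_zero, Function.comp_def] using this
    have hmv : ∀ n : ℕ, ∃ ξ ∈ Set.Ioo (n:ℝ) ((n:ℝ)+1),
        q ξ = (w ((n:ℝ)+1) - w (n:ℝ)) / (((n:ℝ)+1) - (n:ℝ)) := by
      intro n
      exact exists_hasDerivAt_eq_slope w q (by linarith : (n:ℝ) < (n:ℝ)+1)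
        (((Phif_continuous c).comp hcu).continuousOn)
        (fun x _ => hw x)
    choose ξ hξ1 hξ2 using hmv
    have hξtop : Tendsto ξ atTop atTop :=
      tendsto_atTop_mono (fun n => (hξ1 n).1.le) tendsto_natCast_atTop_atTop
    have h1 : Tendsto (fun n => q (ξ n)) atTop (𝓝 0) := by
      have ha : Tendsto (fun n : ℕ => w ((n:ℝ)+1)) atTop (𝓝 0) :=
        hwtop.comp (tendsto_atTop_add_const_right _ 1 tendsto_natCast_atTop_atTop)
      have hb : Tendsto (fun n : ℕ => w (n:ℝ)) atTop (𝓝 0) :=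
        hwtop.comp tendsto_natCast_atTop_atTop
      have hab := ha.sub hb
      rw [sub_zero] at hab
      apply hab.congr
      intro n
      rw [hξ2 n]
      norm_num
    have h2 : Tendsto (fun n => q (ξ n) ^ 2) atTop (𝓝 (2 * E 0)) :=
      hq2top.comp hξtop
    have h3 : Tendsto (fun n => q (ξ n) ^ 2) atTop (𝓝 0) := by
      have := h1.mul h1
      simpa [pow_two] using this
    have := tendsto_nhds_unique h2 h3
    linarith
  have hq2 : ∀ x, q x ^ 2 = -(2 * S) * Gf c (u₀ x) := by
    intro x
    have := hEconst x
    rw [hE00] at this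
    simp only [hEdef] at this
    linarith
  have hGle : ∀ x, Gf c (u₀ x) ≤ 0 := by
    intro x
    nlinarith [sq_nonneg (q x), hq2 x]
  -- u₀ ≤ 1
  have hub : ∀ x, u₀ x ≤ 1 := by
    by_contra hcon
    push_neg at hcon
    obtain ⟨x₁, hx₁⟩ := hcon
    set m' : ℝ := (1 + u₀ x₁) / 2 with hm'def
    have hm'1 : 1 < m' := by rw [hm'def]; linarith
    have hm'2 : m' < u₀ x₁ := by rw [hm'def]; linarith
    obtain ⟨R₁, hR₁⟩ := eventually_atTop.mp
      (hlim0.eventually_lt_const (by linarith : (0:ℝ) < m'))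
    obtain ⟨R₂, hR₂⟩ := eventually_atBot.mp (hlim1.eventually_lt_const hm'1)
    have hx₁m : x₁ ∈ Set.Icc R₂ R₁ := by
      constructor
      · by_contra h; push_neg at h
        exact absurd (hR₂ x₁ h.le) (by linarith)
      · by_contra h; push_neg at h
        exact absurd (hR₁ x₁ h.le) (by linarith)
    obtain ⟨x₀, hx₀m, hmax⟩ := isCompact_Icc.exists_isMaxOn ⟨x₁, hx₁m⟩ hcu.continuousOn
    have hmx₁ : u₀ x₁ ≤ u₀ x₀ := hmax hx₁m
    have hglobal : ∀ y, u₀ y ≤ u₀ x₀ := by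
      intro y
      by_cases hy : y ∈ Set.Icc R₂ R₁
      · exact hmax hy
      · simp only [Set.mem_Icc, not_and_or, not_le] at hy
        rcases hy with h | h
        · linarith [hR₂ y h.le]
        · linarith [hR₁ y h.le]
    have hd0 : deriv u₀ x₀ = 0 :=
      IsLocalMax.deriv_eq_zero (Filter.Eventually.of_forall hglobal)
    have hq0 : q x₀ = 0 := by simp [hqdef, hd0]
    have hG0 : Gf c (u₀ x₀) = 0 := by
      have h2 := hq2 x₀
      rw [hq0] at h2
      have h3 : -(2 * S) * Gf c (u₀ x₀) = 0 := by simpa using h2.symm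
      rcases mul_eq_zero.mp h3 with h | h
      · exfalso; linarith
      · exact h
    have := Gf_neg_of_one_lt c (show 1 < u₀ x₀ by linarith)
    linarith
  -- 0 ≤ u₀
  have hlb : ∀ x, 0 ≤ u₀ x := by
    by_contra hcon
    push_neg at hcon
    obtain ⟨x₁, hx₁⟩ := hcon
    set m' : ℝ := u₀ x₁ / 2 with hm'def
    have hm'1 : m' < 0 := by rw [hm'def]; linarith
    have hm'2 : u₀ x₁ < m' := by rw [hm'def]; linarith
    obtain ⟨R₁, hR₁⟩ := eventually_atTop.mp (hlim0.eventually_const_lt hm'1)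
    obtain ⟨R₂, hR₂⟩ := eventually_atBot.mp
      (hlim1.eventually_const_lt (by linarith : m' < 1))
    have hx₁m : x₁ ∈ Set.Icc R₂ R₁ := by
      constructor
      · by_contra h; push_neg at h
        exact absurd (hR₂ x₁ h.le) (by linarith)
      · by_contra h; push_neg at h
        exact absurd (hR₁ x₁ h.le) (by linarith)
    obtain ⟨x₀, hx₀m, hmin⟩ := isCompact_Icc.exists_isMinOn ⟨x₁, hx₁m⟩ hcu.continuousOn
    have hmx₁ : u₀ x₀ ≤ u₀ x₁ := hmin hx₁m
    have hglobal : ∀ y, u₀ x₀ ≤ u₀ y := by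
      intro y
      by_cases hy : y ∈ Set.Icc R₂ R₁
      · exact hmin hy
      · simp only [Set.mem_Icc, not_and_or, not_le] at hy
        rcases hy with h | h
        · linarith [hR₂ y h.le]
        · linarith [hR₁ y h.le]
    have hd0 : deriv u₀ x₀ = 0 :=
      IsLocalMin.deriv_eq_zero (Filter.Eventually.of_forall hglobal)
    have hq0 : q x₀ = 0 := by simp [hqdef, hd0]
    have hG0 : Gf c (u₀ x₀) = 0 := by
      have h2 := hq2 x₀
      rw [hq0] at h2
      have h3 : -(2 * S) * Gf c (u₀ x₀) = 0 := by simpa using h2.symm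
      rcases mul_eq_zero.mp h3 with h | h
      · exfalso; linarith
      · exact h
    have := Gf_neg_of_neg c (show u₀ x₀ < 0 by linarith)
    linarith
  -- derivative bounds from energy
  set pm : ℝ := Real.exp (-(c/4)) with hpmdef
  have hpm : 0 < pm := Real.exp_pos _
  have hu'sq1 : ∀ x, pm ^ 2 * (deriv u₀ x) ^ 2 ≤ S * u₀ x := by
    intro x
    have h1 : -(2 * S) * Gf c (u₀ x) ≤ 2 * S * (u₀ x ^ 2 / 2) := by
      have := Gf_ge_sq hc.le ⟨hlb x, hub x⟩
      nlinarith
    have h2 : pm ^ 2 * (deriv u₀ x) ^ 2 ≤ q x ^ 2 := by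
      have hpmP : pm ^ 2 ≤ Pf c (u₀ x) ^ 2 :=
        pow_le_pow_left₀ hpm.le (Pf_ge hc.le (u₀ x)) 2
      simp only [hqdef, mul_pow]
      exact mul_le_mul_of_nonneg_right hpmP (sq_nonneg _)
    have h3 : u₀ x ^ 2 ≤ u₀ x := by nlinarith [hlb x, hub x]
    nlinarith [hq2 x]
  have hu'sq2 : ∀ x, pm ^ 2 * (deriv u₀ x) ^ 2 ≤ S * (1 - u₀ x) := by
    intro x
    have h1 : -(2 * S) * Gf c (u₀ x) ≤ 2 * S * ((1 - u₀ x) ^ 2 / 2) := by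
      have := Gf_ge_one_sub_sq hc.le ⟨hlb x, hub x⟩
      nlinarith
    have h2 : pm ^ 2 * (deriv u₀ x) ^ 2 ≤ q x ^ 2 := by
      have hpmP : pm ^ 2 ≤ Pf c (u₀ x) ^ 2 :=
        pow_le_pow_left₀ hpm.le (Pf_ge hc.le (u₀ x)) 2
      simp only [hqdef, mul_pow]
      exact mul_le_mul_of_nonneg_right hpmP (sq_nonneg _)
    have h3 : (1 - u₀ x) ^ 2 ≤ 1 - u₀ x := by nlinarith [hlb x, hub x]
    nlinarith [hq2 x]
  -- Gronwall constant
  set K : ℝ := max 1 (S + c * (S / pm ^ 2)) with hKdef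
  have hK1 : 1 ≤ K := le_max_left _ _
  have hK2 : S + c * (S / pm ^ 2) ≤ K := le_max_right _ _
  have hK0 : 0 ≤ K := le_trans zero_le_one hK1
  -- strict bounds
  have hlt1 : ∀ x, u₀ x < 1 := by
    intro x
    rcases lt_or_eq_of_le (hub x) with h | heq
    · exact h
    exfalso
    have hd0 : deriv u₀ x = 0 :=
      IsLocalMax.deriv_eq_zero (Filter.Eventually.of_forall fun y => (hub y).trans heq.ge)
    set F : ℝ → ℝ × ℝ := fun t => (1 - u₀ t, -deriv u₀ t) with hFdef
    have hF' : ∀ t, HasDerivAt F (-deriv u₀ t, -deriv (deriv u₀) t) t := fun t =>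
      HasDerivAt.prodMk ((hd1 t).hasDerivAt.const_sub 1) ((hd2 t).hasDerivAt.neg)
    have hbound : ∀ t, ‖(-deriv u₀ t, -deriv (deriv u₀) t)‖ ≤ K * ‖F t‖ := by
      intro t
      have husq' : (deriv u₀ t) ^ 2 ≤ S / pm ^ 2 * (1 - u₀ t) := by
        rw [div_mul_eq_mul_div, le_div_iff₀ (by positivity)]
        linarith [hu'sq2 t]
      have h2u := abs_le.mp (show |2 * u₀ t - 1| ≤ 1 by
        rw [abs_le]; constructor <;> [linarith [hlb t]; linarith [hub t]])
      have hfab := abs_le.mp (abs_fpoly_le_one_sub (hlb t) (hub t))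
      have habs : |(-(S * fpoly (u₀ t)) - c * (2 * u₀ t - 1) * deriv u₀ t ^ 2)|
          ≤ (S + c * (S / pm ^ 2)) * (1 - u₀ t) := by
        rw [abs_le]
        have m1 := mul_le_mul_of_nonneg_right h2u.2 (sq_nonneg (deriv u₀ t))
        have m2 := mul_le_mul_of_nonneg_right h2u.1 (sq_nonneg (deriv u₀ t))
        have p1 := mul_le_mul_of_nonneg_left husq' hc.le
        have p2 := mul_le_mul_of_nonneg_left hfab.1 hS.le
        have p3 := mul_le_mul_of_nonneg_left hfab.2 hS.le
        have p4 := mul_le_mul_of_nonneg_left m1 hc.le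
        have p5 := mul_le_mul_of_nonneg_left m2 hc.le
        constructor <;> linarith [p1, p2, p3, p4, p5]
      have hFn : ‖F t‖ = max (1 - u₀ t) |deriv u₀ t| := by
        simp [hFdef, Prod.norm_def, Real.norm_eq_abs, abs_neg,
          abs_of_nonneg (by linarith [hub t] : (0:ℝ) ≤ 1 - u₀ t)]
      rw [Prod.norm_def]
      apply max_le
      · rw [Real.norm_eq_abs, abs_neg, hFn]
        calc |deriv u₀ t| ≤ max (1 - u₀ t) |deriv u₀ t| := le_max_right _ _
          _ ≤ K * max (1 - u₀ t) |deriv u₀ t| :=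
            le_mul_of_one_le_left (le_max_of_le_right (abs_nonneg _)) hK1
      · rw [Real.norm_eq_abs, abs_neg, hode' t, hFn]
        calc |(-(S * fpoly (u₀ t)) - c * (2 * u₀ t - 1) * deriv u₀ t ^ 2)|
            ≤ (S + c * (S / pm ^ 2)) * (1 - u₀ t) := habs
          _ ≤ K * max (1 - u₀ t) |deriv u₀ t| :=
            mul_le_mul hK2 (le_max_left _ _) (by linarith [hub t]) hK0
    have hF0 : F x = 0 := by
      simp [hFdef, heq, hd0, Prod.ext_iff]
    have key := gronwall_zero hF' hbound hF0
    have hone : ∀ t, x ≤ t → u₀ t = 1 := by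
      intro t ht
      have h1 := congrArg Prod.fst (key t ht)
      simp only [hFdef, Prod.fst_zero] at h1
      linarith
    have hto : Tendsto u₀ atTop (𝓝 1) := by
      apply Tendsto.congr' _ (tendsto_const_nhds (x := (1:ℝ)))
      filter_upwards [eventually_ge_atTop x] with t ht
      exact (hone t ht).symm
    have h10 := tendsto_nhds_unique hto hlim0
    norm_num at h10
  have hgt0 : ∀ x, 0 < u₀ x := by
    intro x
    rcases lt_or_eq_of_le (hlb x) with h | heq
    · exact h
    exfalso
    have heq' : u₀ x = 0 := heq.symm
    have hd0 : deriv u₀ x = 0 :=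
      IsLocalMin.deriv_eq_zero (Filter.Eventually.of_forall fun y => by
        rw [heq']; exact hlb y)
    set F : ℝ → ℝ × ℝ := fun t => (u₀ (x - t), deriv u₀ (x - t)) with hFdef
    have hin : ∀ t : ℝ, HasDerivAt (fun s : ℝ => x - s) (-1) t := by
      intro t
      simpa using (hasDerivAt_id t).const_sub x
    have hF' : ∀ t, HasDerivAt F (-deriv u₀ (x - t), -deriv (deriv u₀) (x - t)) t := by
      intro t
      have h1 : HasDerivAt (fun s => u₀ (x - s)) (deriv u₀ (x - t) * (-1)) t :=
        (hd1 (x - t)).hasDerivAt.comp t (hin t)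
      have h2 : HasDerivAt (fun s => deriv u₀ (x - s)) (deriv (deriv u₀) (x - t) * (-1)) t :=
        (hd2 (x - t)).hasDerivAt.comp t (hin t)
      exact HasDerivAt.prodMk (h1.congr_deriv (by ring)) (h2.congr_deriv (by ring))
    have hbound : ∀ t, ‖(-deriv u₀ (x - t), -deriv (deriv u₀) (x - t))‖ ≤ K * ‖F t‖ := by
      intro t
      set s : ℝ := x - t with hsdef
      have husq' : (deriv u₀ s) ^ 2 ≤ S / pm ^ 2 * u₀ s := by
        rw [div_mul_eq_mul_div, le_div_iff₀ (by positivity)]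
        linarith [hu'sq1 s]
      have h2u := abs_le.mp (show |2 * u₀ s - 1| ≤ 1 by
        rw [abs_le]; constructor <;> [linarith [hlb s]; linarith [hub s]])
      have hfab := abs_le.mp (abs_fpoly_le_self (hlb s) (hub s))
      have habs : |(-(S * fpoly (u₀ s)) - c * (2 * u₀ s - 1) * deriv u₀ s ^ 2)|
          ≤ (S + c * (S / pm ^ 2)) * u₀ s := by
        rw [abs_le]
        have m1 := mul_le_mul_of_nonneg_right h2u.2 (sq_nonneg (deriv u₀ s))
        have m2 := mul_le_mul_of_nonneg_right h2u.1 (sq_nonneg (deriv u₀ s))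
        have p1 := mul_le_mul_of_nonneg_left husq' hc.le
        have p2 := mul_le_mul_of_nonneg_left hfab.1 hS.le
        have p3 := mul_le_mul_of_nonneg_left hfab.2 hS.le
        have p4 := mul_le_mul_of_nonneg_left m1 hc.le
        have p5 := mul_le_mul_of_nonneg_left m2 hc.le
        constructor <;> linarith [p1, p2, p3, p4, p5]
      have hFn : ‖F t‖ = max (u₀ s) |deriv u₀ s| := by
        simp [hFdef, Prod.norm_def, Real.norm_eq_abs, ← hsdef, abs_of_nonneg (hlb s)]
      rw [Prod.norm_def]
      apply max_le
      · rw [Real.norm_eq_abs, abs_neg, hFn]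
        calc |deriv u₀ s| ≤ max (u₀ s) |deriv u₀ s| := le_max_right _ _
          _ ≤ K * max (u₀ s) |deriv u₀ s| :=
            le_mul_of_one_le_left (le_max_of_le_right (abs_nonneg _)) hK1
      · rw [Real.norm_eq_abs, abs_neg, hode' s, hFn]
        calc |(-(S * fpoly (u₀ s)) - c * (2 * u₀ s - 1) * deriv u₀ s ^ 2)|
            ≤ (S + c * (S / pm ^ 2)) * u₀ s := habs
          _ ≤ K * max (u₀ s) |deriv u₀ s| :=
            mul_le_mul hK2 (le_max_left _ _) (hlb s) hK0
    have hF0 : F 0 = 0 := by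
      simp [hFdef, heq', hd0, Prod.ext_iff]
    have key := gronwall_zero hF' hbound hF0
    have hzero : ∀ y, y ≤ x → u₀ y = 0 := by
      intro y hy
      have h1 := congrArg Prod.fst (key (x - y) (by linarith))
      simp only [hFdef, Prod.fst_zero] at h1
      rw [show x - (x - y) = y by ring] at h1
      exact h1
    have hto : Tendsto u₀ atBot (𝓝 0) := by
      apply Tendsto.congr' _ (tendsto_const_nhds (x := (0:ℝ)))
      filter_upwards [eventually_le_atBot x] with t ht
      exact (hzero t ht).symm
    have h10 := tendsto_nhds_unique hto hlim1
    norm_num at h10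
  -- limits of deriv
  have hqlim : ∀ l : Filter ℝ, Tendsto (fun x => Gf c (u₀ x)) l (𝓝 0) →
      Tendsto q l (𝓝 0) := by
    intro l hGl
    have hq2l : Tendsto (fun x => q x ^ 2) l (𝓝 0) := by
      have : Tendsto (fun x => -(2 * S) * Gf c (u₀ x)) l (𝓝 (-(2 * S) * 0)) :=
        hGl.const_mul _
      simpa [hq2] using this
    rw [tendsto_zero_iff_abs_tendsto_zero]
    have : Tendsto (fun x => Real.sqrt (q x ^ 2)) l (𝓝 (Real.sqrt 0)) :=
      (Real.continuous_sqrt.tendsto 0).comp hq2l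
    simpa [Real.sqrt_sq_eq_abs, Function.comp_def] using this
  have hderiv_eq : ∀ x, deriv u₀ x = q x / Pf c (u₀ x) := by
    intro x
    field_simp [hqdef, (Pf_pos c (u₀ x)).ne']
    simp only [hqdef]; ring
  have hdtop : Tendsto (deriv u₀) atTop (𝓝 0) := by
    have hP : Tendsto (fun x => Pf c (u₀ x)) atTop (𝓝 1) := by
      have := ((Pf_continuous c).tendsto 0).comp hlim0
      simpa [Pf, Function.comp_def] using this
    have := (hqlim atTop hGtop).div hP one_ne_zero
    simp only [zero_div] at this
    exact this.congr fun x => (hderiv_eq x).symm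
  have hdbot : Tendsto (deriv u₀) atBot (𝓝 0) := by
    have hP : Tendsto (fun x => Pf c (u₀ x)) atBot (𝓝 1) := by
      have := ((Pf_continuous c).tendsto 1).comp hlim1
      simpa [Pf, Function.comp_def] using this
    have := (hqlim atBot hGbot).div hP one_ne_zero
    simp only [zero_div] at this
    exact this.congr fun x => (hderiv_eq x).symm
  exact ⟨fun x => ⟨hgt0 x, hlt1 x⟩, hdbot, hdtop⟩
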